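/- Consider the combinatorial neural code R on the 16 neurons {1,2,3,4,5,6,a,b,c,d,e,f,g,h,i,j} with codewords {1,2,a,b}, {1,3,a,c,e}, {1,4,c,h}, {2,3,b,g,d}, {2,4,d,j}, {3,5,e,f}, {3,6,f,g}, {4,6,h,i}, {4,5,i,j}, {1,a}, {1,c}, {2,b}, {2,d}, {3,e}, {3,f}, {3,g}, {4,i}, {4,h}, {4,j}, {5}, {6}, ∅. Then R is neither open convex nor closed convex: for every d ≥ 1 there is no family of convex open sets in ℝ^d realizing R, and no family of convex closed sets in ℝ^d realizing R. -/

import Mathlib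

/-- The atom of a subset `σ` of neurons with respect to a family of sets `U`:
`A_σ = (⋂_{i ∈ σ} U_i) \ (⋃_{j ∉ σ} U_j)`. -/
def atomOf {n : ℕ} {X : Type*} (U : Fin n → Set X) (σ : Set (Fin n)) : Set X :=
  (⋂ i ∈ σ, U i) \ (⋃ j ∈ σᶜ, U j)

/-- The combinatorial code of a family of sets: the collection of subsets with
nonempty atom. -/
def codeOf {n : ℕ} {X : Type*} (U : Fin n → Set X) : Set (Set (Fin n)) :=
  {σ | (atomOf U σ).Nonempty}

/-- The code `R` on 16 neurons `{1,…,6, a, b, …, j}`, with neurons `1,…,6` encoded as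
`0,…,5 : Fin 16` and `a, b, c, d, e, f, g, h, i, j` encoded as `6, 7, …, 15 : Fin 16`. -/
def codeR : Set (Set (Fin 16)) :=
  {{0, 1, 6, 7},        -- 12ab
   {0, 2, 6, 8, 10},    -- 13ace
   {0, 3, 8, 13},       -- 14ch
   {1, 2, 7, 12, 9},    -- 23bgd
   {1, 3, 9, 15},       -- 24dj
   {2, 4, 10, 11},      -- 35ef
   {2, 5, 11, 12},      -- 36fg
   {3, 5, 13, 14},      -- 46hi
   {3, 4, 14, 15},      -- 45ij
   {0, 6},              -- 1a
   {0, 8},              -- 1c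
   {1, 7},              -- 2b
   {1, 9},              -- 2d
   {2, 10},             -- 3e
   {2, 11},             -- 3f
   {2, 12},             -- 3g
   {3, 14},             -- 4i
   {3, 13},             -- 4h
   {3, 15},             -- 4j
   {4},                 -- 5
   {5},                 -- 6
   ∅}

lemma cover_step {X : Type*} [TopologicalSpace X] {S u v : Set X} (hS : IsPreconnected S)
    (huv : (IsOpen u ∧ IsOpen v) ∨ (IsClosed u ∧ IsClosed v)) (hcov : S ⊆ u ∪ v)
    (hu : (S ∩ u).Nonempty) (hv : (S ∩ v).Nonempty) : (S ∩ (u ∩ v)).Nonempty := by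
  rcases huv with ⟨h1, h2⟩ | ⟨h1, h2⟩
  · exact hS u v h1 h2 hcov hu hv
  · exact (isPreconnected_closed_iff.mp hS) u v h1 h2 hcov hu hv

lemma isCompact_seg {d : ℕ} (x y : EuclideanSpace ℝ (Fin d)) : IsCompact (segment ℝ x y) := by
  rw [← convexHull_pair]
  exact (Set.finite_singleton y |>.insert x).isCompact_convexHull (𝕜 := ℝ)

set_option synthInstance.maxSize 2000 in
set_option synthInstance.maxHeartbeats 2000000 in
set_option maxHeartbeats 2000000 in
lemma noReal {d : ℕ} (U : Fin 16 → Set (EuclideanSpace ℝ (Fin d)))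
    (hconv : ∀ i, Convex ℝ (U i))
    (htop : (∀ i, IsOpen (U i)) ∨ (∀ i, IsClosed (U i)))
    (hcode : codeOf U = codeR) : False := by
  -- every point's codeword is in codeR
  have hcw : ∀ p : EuclideanSpace ℝ (Fin d), {i : Fin 16 | p ∈ U i} ∈ codeR := by
    intro p
    rw [← hcode]
    refine ⟨p, Set.mem_iInter₂.mpr fun i hi => hi, ?_⟩
    intro h
    rcases Set.mem_iUnion₂.mp h with ⟨j, hj, hpj⟩
    exact hj hpj
  -- combinatorial consequences
  have key : ∀ p : EuclideanSpace ℝ (Fin d),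
      (p ∈ U 6 → p ∈ U 8 → p ∈ U 2 ∧ p ∈ U 10) ∧
      (p ∈ U 7 → p ∈ U 9 → p ∈ U 2 ∧ p ∈ U 12) ∧
      (p ∈ U 0 → p ∈ U 6 ∨ p ∈ U 8) ∧
      (p ∈ U 1 → p ∈ U 7 ∨ p ∈ U 9) ∧
      (p ∈ U 2 → p ∈ U 10 ∨ p ∈ U 11 ∨ p ∈ U 12) ∧
      (p ∈ U 3 → p ∈ U 13 ∨ p ∈ U 14 ∨ p ∈ U 15) ∧
      (p ∈ U 10 → p ∈ U 12 → False) ∧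
      (p ∈ U 13 → p ∈ U 15 → False) ∧
      (p ∈ U 10 → p ∈ U 11 → p ∈ U 4) ∧
      (p ∈ U 11 → p ∈ U 12 → p ∈ U 5) ∧
      (p ∈ U 13 → p ∈ U 14 → p ∈ U 5) ∧
      (p ∈ U 14 → p ∈ U 15 → p ∈ U 4) ∧
      (p ∈ U 4 → p ∈ U 5 → False) := by
    intro p
    have h := hcw p
    simp only [codeR, Set.mem_insert_iff, Set.mem_singleton_iff] at h
    rcases h with h|h|h|h|h|h|h|h|h|h|h|h|h|h|h|h|h|h|h|h|h|h <;>
    · simp only [Set.ext_iff, Set.mem_setOf_eq] at h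
      simp only [h, Set.mem_insert_iff, Set.mem_singleton_iff, Set.mem_empty_iff_false]
      decide
  -- nonempty atoms give points
  have hne : ∀ σ : Set (Fin 16), σ ∈ codeR → ∃ p : EuclideanSpace ℝ (Fin d), ∀ i ∈ σ, p ∈ U i := by
    intro σ hσ
    rw [← hcode] at hσ
    obtain ⟨p, hp⟩ := hσ
    exact ⟨p, fun i hi => Set.mem_iInter₂.mp hp.1 i hi⟩
  obtain ⟨p12, hp12⟩ := hne {0, 1, 6, 7} (by simp [codeR])
  obtain ⟨P2, hP2⟩ := hne {0, 3, 8, 13} (by simp [codeR])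
  obtain ⟨Q2, hQ2⟩ := hne {1, 3, 9, 15} (by simp [codeR])
  have h12_0 : p12 ∈ U 0 := hp12 0 (by simp)
  have h12_1 : p12 ∈ U 1 := hp12 1 (by simp)
  have h12_6 : p12 ∈ U 6 := hp12 6 (by simp)
  have h12_7 : p12 ∈ U 7 := hp12 7 (by simp)
  have hP2_0 : P2 ∈ U 0 := hP2 0 (by simp)
  have hP2_3 : P2 ∈ U 3 := hP2 3 (by simp)
  have hP2_8 : P2 ∈ U 8 := hP2 8 (by simp)
  have hP2_13 : P2 ∈ U 13 := hP2 13 (by simp)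
  have hQ2_1 : Q2 ∈ U 1 := hQ2 1 (by simp)
  have hQ2_3 : Q2 ∈ U 3 := hQ2 3 (by simp)
  have hQ2_9 : Q2 ∈ U 9 := hQ2 9 (by simp)
  have hQ2_15 : Q2 ∈ U 15 := hQ2 15 (by simp)
  have topUV : ∀ u v : Set (EuclideanSpace ℝ (Fin d)), (∃ i, u = U i) ∨ (∃ i j, u = U i ∪ U j) →
      (∃ i, v = U i) ∨ (∃ i j, v = U i ∪ U j) →
      (IsOpen u ∧ IsOpen v) ∨ (IsClosed u ∧ IsClosed v) := by
    rintro u v (⟨i, rfl⟩ | ⟨i, j, rfl⟩) (⟨k, rfl⟩ | ⟨k, l, rfl⟩) <;>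
      rcases htop with h | h
    · exact Or.inl ⟨h i, h k⟩
    · exact Or.inr ⟨h i, h k⟩
    · exact Or.inl ⟨h i, (h k).union (h l)⟩
    · exact Or.inr ⟨h i, (h k).union (h l)⟩
    · exact Or.inl ⟨(h i).union (h j), h k⟩
    · exact Or.inr ⟨(h i).union (h j), h k⟩
    · exact Or.inl ⟨(h i).union (h j), (h k).union (h l)⟩
    · exact Or.inr ⟨(h i).union (h j), (h k).union (h l)⟩
  -- w1 ∈ [p12, P2] ∩ U6 ∩ U8, hence in U2 ∩ U10
  have hseg1 : segment ℝ p12 P2 ⊆ U 0 := (hconv 0).segment_subset h12_0 hP2_0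
  obtain ⟨w1, hw1seg, hw1_6, hw1_8⟩ :
      ∃ w1, w1 ∈ segment ℝ p12 P2 ∧ w1 ∈ U 6 ∧ w1 ∈ U 8 := by
    obtain ⟨w, hw⟩ := cover_step (convex_segment p12 P2).isPreconnected
      (topUV _ _ (Or.inl ⟨6, rfl⟩) (Or.inl ⟨8, rfl⟩))
      (fun x hx => (Set.mem_union _ _ _).mpr ((key x).2.2.1 (hseg1 hx)))
      ⟨p12, left_mem_segment ℝ p12 P2, h12_6⟩ ⟨P2, right_mem_segment ℝ p12 P2, hP2_8⟩
    exact ⟨w, hw.1, hw.2.1, hw.2.2⟩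
  obtain ⟨hw1_2, hw1_10⟩ := (key w1).1 hw1_6 hw1_8
  -- w2 ∈ [p12, Q2] ∩ U7 ∩ U9, hence in U2 ∩ U12
  have hseg2 : segment ℝ p12 Q2 ⊆ U 1 := (hconv 1).segment_subset h12_1 hQ2_1
  obtain ⟨w2, hw2seg, hw2_7, hw2_9⟩ :
      ∃ w2, w2 ∈ segment ℝ p12 Q2 ∧ w2 ∈ U 7 ∧ w2 ∈ U 9 := by
    obtain ⟨w, hw⟩ := cover_step (convex_segment p12 Q2).isPreconnected
      (topUV _ _ (Or.inl ⟨7, rfl⟩) (Or.inl ⟨9, rfl⟩))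
      (fun x hx => (Set.mem_union _ _ _).mpr ((key x).2.2.2.1 (hseg2 hx)))
      ⟨p12, left_mem_segment ℝ p12 Q2, h12_7⟩ ⟨Q2, right_mem_segment ℝ p12 Q2, hQ2_9⟩
    exact ⟨w, hw.1, hw.2.1, hw.2.2⟩
  obtain ⟨hw2_2, hw2_12⟩ := (key w2).2.1 hw2_7 hw2_9
  -- v0 ∈ [w1, w2] ∩ U11 ∩ U12, hence in U5
  have hseg3 : segment ℝ w1 w2 ⊆ U 2 := (hconv 2).segment_subset hw1_2 hw2_2
  obtain ⟨v0, hv0seg, hv0_11, hv0_12⟩ :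
      ∃ v0, v0 ∈ segment ℝ w1 w2 ∧ v0 ∈ U 11 ∧ v0 ∈ U 12 := by
    obtain ⟨w, hwseg, hwu, hwv⟩ := cover_step (convex_segment w1 w2).isPreconnected
      (topUV (U 10 ∪ U 11) (U 12) (Or.inr ⟨10, 11, rfl⟩) (Or.inl ⟨12, rfl⟩))
      (fun x hx => by
        rcases (key x).2.2.2.2.1 (hseg3 hx) with h | h | h
        · exact Or.inl (Or.inl h)
        · exact Or.inl (Or.inr h)
        · exact Or.inr h)
      ⟨w1, left_mem_segment ℝ w1 w2, Or.inl hw1_10⟩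
      ⟨w2, right_mem_segment ℝ w1 w2, hw2_12⟩
    rcases hwu with h10 | h11
    · exact absurd hwv ((key w).2.2.2.2.2.2.1 h10 · )
    · exact ⟨w, hwseg, h11, hwv⟩
  have hv0_5 : v0 ∈ U 5 := (key v0).2.2.2.2.2.2.2.2.2.1 hv0_11 hv0_12
  have hv0_2 : v0 ∈ U 2 := hseg3 hv0seg
  -- u0 ∈ [w1, v0] ∩ U10 ∩ U11, hence in U4
  have hseg4 : segment ℝ w1 v0 ⊆ U 2 := (hconv 2).segment_subset hw1_2 hv0_2
  obtain ⟨u0, hu0seg, hu0_10, hu0_11⟩ :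
      ∃ u0, u0 ∈ segment ℝ w1 v0 ∧ u0 ∈ U 10 ∧ u0 ∈ U 11 := by
    obtain ⟨w, hwseg, hwu, hwv⟩ := cover_step (convex_segment w1 v0).isPreconnected
      (topUV (U 10) (U 11 ∪ U 12) (Or.inl ⟨10, rfl⟩) (Or.inr ⟨11, 12, rfl⟩))
      (fun x hx => by
        rcases (key x).2.2.2.2.1 (hseg4 hx) with h | h | h
        · exact Or.inl h
        · exact Or.inr (Or.inl h)
        · exact Or.inr (Or.inr h))
      ⟨w1, left_mem_segment ℝ w1 v0, hw1_10⟩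
      ⟨v0, right_mem_segment ℝ w1 v0, Or.inl hv0_11⟩
    rcases hwv with h11 | h12
    · exact ⟨w, hwseg, hwu, h11⟩
    · exact absurd h12 ((key w).2.2.2.2.2.2.1 hwu · )
  have hu0_4 : u0 ∈ U 4 := (key u0).2.2.2.2.2.2.2.2.1 hu0_10 hu0_11
  -- v' ∈ [P2, Q2] ∩ U14 ∩ U15, hence in U4
  have hseg5 : segment ℝ P2 Q2 ⊆ U 3 := (hconv 3).segment_subset hP2_3 hQ2_3
  obtain ⟨v', hv'seg, hv'_14, hv'_15⟩ :
      ∃ v', v' ∈ segment ℝ P2 Q2 ∧ v' ∈ U 14 ∧ v' ∈ U 15 := by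
    obtain ⟨w, hwseg, hwu, hwv⟩ := cover_step (convex_segment P2 Q2).isPreconnected
      (topUV (U 13 ∪ U 14) (U 15) (Or.inr ⟨13, 14, rfl⟩) (Or.inl ⟨15, rfl⟩))
      (fun x hx => by
        rcases (key x).2.2.2.2.2.1 (hseg5 hx) with h | h | h
        · exact Or.inl (Or.inl h)
        · exact Or.inl (Or.inr h)
        · exact Or.inr h)
      ⟨P2, left_mem_segment ℝ P2 Q2, Or.inl hP2_13⟩
      ⟨Q2, right_mem_segment ℝ P2 Q2, hQ2_15⟩
    rcases hwu with h13 | h14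
    · exact absurd hwv ((key w).2.2.2.2.2.2.2.1 h13 · )
    · exact ⟨w, hwseg, h14, hwv⟩
  have hv'_4 : v' ∈ U 4 := (key v').2.2.2.2.2.2.2.2.2.2.2.1 hv'_14 hv'_15
  have hv'_3 : v' ∈ U 3 := hseg5 hv'seg
  -- u' ∈ [P2, v'] ∩ U13 ∩ U14, hence in U5
  have hseg6 : segment ℝ P2 v' ⊆ U 3 := (hconv 3).segment_subset hP2_3 hv'_3
  obtain ⟨u', hu'seg, hu'_13, hu'_14⟩ :
      ∃ u', u' ∈ segment ℝ P2 v' ∧ u' ∈ U 13 ∧ u' ∈ U 14 := by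
    obtain ⟨w, hwseg, hwu, hwv⟩ := cover_step (convex_segment P2 v').isPreconnected
      (topUV (U 13) (U 14 ∪ U 15) (Or.inl ⟨13, rfl⟩) (Or.inr ⟨14, 15, rfl⟩))
      (fun x hx => by
        rcases (key x).2.2.2.2.2.1 (hseg6 hx) with h | h | h
        · exact Or.inl h
        · exact Or.inr (Or.inl h)
        · exact Or.inr (Or.inr h))
      ⟨P2, left_mem_segment ℝ P2 v', hP2_13⟩
      ⟨v', right_mem_segment ℝ P2 v', Or.inl hv'_14⟩
    rcases hwv with h14 | h15
    · exact ⟨w, hwseg, hwu, h14⟩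
    · exact absurd h15 ((key w).2.2.2.2.2.2.2.1 hwu · )
  have hu'_5 : u' ∈ U 5 := (key u').2.2.2.2.2.2.2.2.2.2.1 hu'_13 hu'_14
  -- separate segment [u0, v'] ⊆ U4 from segment [v0, u'] ⊆ U5
  have hK1 : segment ℝ u0 v' ⊆ U 4 := (hconv 4).segment_subset hu0_4 hv'_4
  have hK2 : segment ℝ v0 u' ⊆ U 5 := (hconv 5).segment_subset hv0_5 hu'_5
  have hdisj : Disjoint (segment ℝ u0 v') (segment ℝ v0 u') :=
    Set.disjoint_left.mpr fun x h1 h2 => (key x).2.2.2.2.2.2.2.2.2.2.2.2 (hK1 h1) (hK2 h2)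
  obtain ⟨f, a, b, hfa, hab, hfb⟩ := geometric_hahn_banach_compact_closed
    (convex_segment u0 v') (isCompact_seg u0 v') (convex_segment v0 u')
    (isCompact_seg v0 u').isClosed hdisj
  have hfu0 : f u0 < a := hfa u0 (left_mem_segment ℝ u0 v')
  have hfv' : f v' < a := hfa v' (right_mem_segment ℝ u0 v')
  have hfv0 : b < f v0 := hfb v0 (left_mem_segment ℝ v0 u')
  have hfu' : b < f u' := hfb u' (right_mem_segment ℝ v0 u')
  -- propagation lemmas
  have seg_lt : ∀ {x y z : EuclideanSpace ℝ (Fin d)}, z ∈ segment ℝ x y → f z < a → b < f y → f x < a := by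
    intro x y z hz hza hyb
    obtain ⟨ta, tb, h0, h1, hsum, heq⟩ := hz
    have hfz : f z = ta * f x + tb * f y := by
      rw [← heq, map_add, map_smul, map_smul, smul_eq_mul, smul_eq_mul]
    by_contra hcon
    have e1 : ta * a ≤ ta * f x := mul_le_mul_of_nonneg_left (not_lt.mp hcon) h0
    have e2 : tb * b ≤ tb * f y := mul_le_mul_of_nonneg_left hyb.le h1
    have e3 : tb * a ≤ tb * b := mul_le_mul_of_nonneg_left hab.le h1
    have e4 : ta * a + tb * a = a := by rw [← add_mul, hsum, one_mul]
    linarith [hfz ▸ hza]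
  have seg_gt : ∀ {x y z : EuclideanSpace ℝ (Fin d)}, z ∈ segment ℝ x y → b < f z → f y < a → b < f x := by
    intro x y z hz hzb hya
    obtain ⟨ta, tb, h0, h1, hsum, heq⟩ := hz
    have hfz : f z = ta * f x + tb * f y := by
      rw [← heq, map_add, map_smul, map_smul, smul_eq_mul, smul_eq_mul]
    by_contra hcon
    have e1 : ta * f x ≤ ta * b := mul_le_mul_of_nonneg_left (not_lt.mp hcon) h0
    have e2 : tb * f y ≤ tb * a := mul_le_mul_of_nonneg_left hya.le h1
    have e3 : tb * a ≤ tb * b := mul_le_mul_of_nonneg_left hab.le h1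
    have e4 : ta * b + tb * b = b := by rw [← add_mul, hsum, one_mul]
    linarith [hfz ▸ hzb]
  -- chain
  have h_w1 : f w1 < a := seg_lt hu0seg hfu0 hfv0
  have h_w2 : b < f w2 := seg_gt (segment_symm ℝ w1 w2 ▸ hv0seg) hfv0 h_w1
  have h_P2 : b < f P2 := seg_gt hu'seg hfu' hfv'
  have h_Q2 : f Q2 < a := seg_lt (segment_symm ℝ P2 Q2 ▸ hv'seg) hfv' h_P2
  have h_a : f p12 < a := seg_lt hw1seg h_w1 h_P2
  have h_b : b < f p12 := seg_gt hw2seg h_w2 h_Q2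
  linarith


/-- The code `R` is neither open convex nor closed convex in any dimension `d ≥ 1`. -/
theorem stmt5 : ∀ d : ℕ, 1 ≤ d →
    (¬ ∃ U : Fin 16 → Set (EuclideanSpace ℝ (Fin d)),
        (∀ i, Convex ℝ (U i)) ∧ (∀ i, IsOpen (U i)) ∧ codeOf U = codeR) ∧
    (¬ ∃ U : Fin 16 → Set (EuclideanSpace ℝ (Fin d)),
        (∀ i, Convex ℝ (U i)) ∧ (∀ i, IsClosed (U i)) ∧ codeOf U = codeR) := by
  intro d _
  constructor
  · rintro ⟨U, hc, ht, hcode⟩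
    exact noReal U hc (Or.inl ht) hcode
  · rintro ⟨U, hc, ht, hcode⟩
    exact noReal U hc (Or.inr ht) hcode
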